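/- Let m >= 0 and n >= 1 be integers. Then Y^(m)(n) = sum over pairs (t,s) of positive integers with t*(t+s) = n, s odd and s >= 2m+1 of (-1)^t, minus the sum over pairs (t,s) of positive integers with t*(t+s) = 2n, s odd and s >= 2m+1 of (-1)^t. -/

import Mathlib

/-- The geometric series `1/(1-q^k) = ∑_{j ≥ 0} q^{k·j}` as a formal power series over `ℤ`:
its coefficient at `q^n` is `1` exactly when `k ∣ n`. -/
def geomSer (k : ℕ) : PowerSeries ℤ := PowerSeries.mk fun n => if k ∣ n then 1 else 0

/-- The formal power series `∑_{k ≥ 1} (-1)^k q^{k(3k+1)+2mk}/(1-q^{2k})`.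
For a fixed `n`, only the (finitely many) summands with `1 ≤ k ≤ n` can contribute to the
coefficient of `q^n` (for `k > n` the lowest exponent `k(3k+1)+2mk` exceeds `n`), so the
coefficient of `q^n` of the infinite sum is the corresponding finite sum of coefficients. -/
noncomputable def seriesA (m : ℕ) : PowerSeries ℤ :=
  PowerSeries.mk fun n => ∑ k ∈ Finset.Icc 1 n,
    (PowerSeries.coeff (R := ℤ) n)
      (PowerSeries.C (R := ℤ) ((-1) ^ k) * PowerSeries.X ^ (k * (3 * k + 1) + 2 * m * k) *
        geomSer (2 * k))

/-- The formal power series `∑_{k ≥ 1} (-1)^k q^{k(k+1)/2+mk}/(1-q^k)` (same convention). -/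
noncomputable def seriesB (m : ℕ) : PowerSeries ℤ :=
  PowerSeries.mk fun n => ∑ k ∈ Finset.Icc 1 n,
    (PowerSeries.coeff (R := ℤ) n)
      (PowerSeries.C (R := ℤ) ((-1) ^ k) * PowerSeries.X ^ (k * (k + 1) / 2 + m * k) * geomSer k)

/-- The formal power series `∑_{k ≥ 1} (-1)^k q^{k(k+1)+2mk}/(1-q^{2k})` (same convention). -/
noncomputable def seriesC (m : ℕ) : PowerSeries ℤ :=
  PowerSeries.mk fun n => ∑ k ∈ Finset.Icc 1 n,
    (PowerSeries.coeff (R := ℤ) n)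
      (PowerSeries.C (R := ℤ) ((-1) ^ k) * PowerSeries.X ^ (k * (k + 1) + 2 * m * k) *
        geomSer (2 * k))

lemma coeff_aux (a : ℤ) (e d n : ℕ) :
    (PowerSeries.coeff (R := ℤ) n) (PowerSeries.C (R := ℤ) a * PowerSeries.X ^ e * geomSer d) =
      if e ≤ n ∧ d ∣ (n - e) then a else 0 := by
  rw [mul_assoc, PowerSeries.coeff_C_mul, PowerSeries.coeff_X_pow_mul', geomSer,
    PowerSeries.coeff_mk]
  by_cases h1 : e ≤ n
  · by_cases h2 : d ∣ n - e <;> simp [h1, h2]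
  · simp [h1]

lemma innerC (m n t : ℕ) (ht : 1 ≤ t) (v : ℤ) :
    (∑ s ∈ Finset.Icc 1 n, if t*(t+s) = n ∧ Odd s ∧ 2*m+1 ≤ s then v else 0)
      = if t*(t+1) + 2*m*t ≤ n ∧ 2*t ∣ n - (t*(t+1) + 2*m*t) then v else 0 := by
  set e := t*(t+1) + 2*m*t with he
  by_cases h : e ≤ n ∧ 2*t ∣ n - e
  · obtain ⟨h1, j, hj⟩ := h
    have hn' : n = 2*t*j + e := (Nat.sub_eq_iff_eq_add h1).mp hj
    have hts : t*(t+(2*m+1+2*j)) = n := by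
      rw [hn', he]; ring
    have h2n : t + (2*m+1+2*j) ≤ n := hts ▸ Nat.le_mul_of_pos_left _ ht
    have hP0 : t*(t+(2*m+1+2*j)) = n ∧ Odd (2*m+1+2*j) ∧ 2*m+1 ≤ 2*m+1+2*j :=
      ⟨hts, ⟨m+j, by omega⟩, by omega⟩
    have key : ∀ s, (t*(t+s) = n ∧ Odd s ∧ 2*m+1 ≤ s) ↔ s = 2*m+1+2*j := by
      intro s
      constructor
      · rintro ⟨h', -, -⟩
        have := Nat.eq_of_mul_eq_mul_left ht (h'.trans hts.symm)
        omega
      · rintro rfl; exact hP0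
    simp only [key]
    rw [Finset.sum_ite_eq' _ (2*m+1+2*j) fun _ => v,
      if_pos (Finset.mem_Icc.mpr ⟨by omega, by omega⟩), if_pos ⟨h1, j, hj⟩]
  · rw [if_neg h]
    apply Finset.sum_eq_zero
    intro s hs
    rw [if_neg]
    rintro ⟨hts, ⟨c, hc⟩, hms⟩
    have hcm : m ≤ c := by omega
    have hexp : t*(t+s) = 2*t*(c-m) + e := by
      have : s = 2*m+1+2*(c-m) := by omega
      rw [this, he]; ring
    have hn' : n = 2*t*(c-m) + e := hts.symm.trans hexp
    have h1 : e ≤ n := by rw [hn']; exact Nat.le_add_left _ _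
    have h2 : n - e = 2*t*(c-m) := by rw [hn']; exact Nat.add_sub_cancel _ _
    exact h ⟨h1, ⟨c-m, h2⟩⟩

lemma innerB (m n t : ℕ) (ht : 1 ≤ t) (v : ℤ) :
    (∑ s ∈ Finset.Icc 1 (2*n), if t*(t+s) = 2*n ∧ Odd s ∧ 2*m+1 ≤ s then v else 0)
      = if t*(t+1)/2 + m*t ≤ n ∧ t ∣ n - (t*(t+1)/2 + m*t) then v else 0 := by
  set e := t*(t+1)/2 + m*t with he
  have h2e : 2*(t*(t+1)/2) = t*(t+1) := Nat.mul_div_cancel' (Nat.even_mul_succ_self t).two_dvd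
  have h2e' : 2*e = t*(t+1) + 2*(m*t) := by rw [he, Nat.mul_add, h2e]
  by_cases h : e ≤ n ∧ t ∣ n - e
  · obtain ⟨h1, j, hj⟩ := h
    have hn' : n = t*j + e := (Nat.sub_eq_iff_eq_add h1).mp hj
    have hts : t*(t+(2*m+1+2*j)) = 2*n := by
      have : t*(t+(2*m+1+2*j)) = t*(t+1) + 2*(m*t) + 2*(t*j) := by ring
      rw [this, ← h2e', hn']; ring
    have h2n : t + (2*m+1+2*j) ≤ 2*n := hts ▸ Nat.le_mul_of_pos_left _ ht
    have hP0 : t*(t+(2*m+1+2*j)) = 2*n ∧ Odd (2*m+1+2*j) ∧ 2*m+1 ≤ 2*m+1+2*j :=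
      ⟨hts, ⟨m+j, by omega⟩, by omega⟩
    have key : ∀ s, (t*(t+s) = 2*n ∧ Odd s ∧ 2*m+1 ≤ s) ↔ s = 2*m+1+2*j := by
      intro s
      constructor
      · rintro ⟨h', -, -⟩
        have := Nat.eq_of_mul_eq_mul_left ht (h'.trans hts.symm)
        omega
      · rintro rfl; exact hP0
    simp only [key]
    rw [Finset.sum_ite_eq' _ (2*m+1+2*j) fun _ => v,
      if_pos (Finset.mem_Icc.mpr ⟨by omega, by omega⟩), if_pos ⟨h1, j, hj⟩]
  · rw [if_neg h]
    apply Finset.sum_eq_zero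
    intro s hs
    rw [if_neg]
    rintro ⟨hts, ⟨c, hc⟩, hms⟩
    have hcm : m ≤ c := by omega
    have hexp : t*(t+s) = 2*(t*(c-m)) + 2*e := by
      have hss : s = 2*m+1+2*(c-m) := by omega
      rw [hss, h2e']; ring
    have hn' : 2*n = 2*(t*(c-m) + e) := by rw [← hts, hexp]; ring
    have hn'' : n = t*(c-m) + e := by
      exact Nat.eq_of_mul_eq_mul_left (by norm_num) hn'
    have h1 : e ≤ n := by rw [hn'']; exact Nat.le_add_left _ _
    have h2 : n - e = t*(c-m) := by rw [hn'']; exact Nat.add_sub_cancel _ _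
    exact h ⟨h1, ⟨c-m, h2⟩⟩

/-- Let `m ≥ 0` and `n ≥ 1` be integers. Then
`Y^(m)(n) = ∑_{t(t+s)=n, t≥1, s≥2m+1 odd} (-1)^t - ∑_{t(t+s)=2n, t≥1, s≥2m+1 odd} (-1)^t`
(both sums over pairs `(t,s)` of positive integers; note such pairs satisfy `t,s ≤ n`,
resp. `t,s ≤ 2n`, so the sums can be taken over the finite ranges below). -/
theorem stmt15 (m : ℕ) (Y : ℕ → ℤ)
    (hY : PowerSeries.mk Y = seriesC m - seriesB m)
    (n : ℕ) (hn : 1 ≤ n) :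
    Y n =
      (∑ p ∈ (Finset.Icc 1 n ×ˢ Finset.Icc 1 n).filter
          (fun p : ℕ × ℕ => p.1 * (p.1 + p.2) = n ∧ Odd p.2 ∧ 2 * m + 1 ≤ p.2),
        (-1 : ℤ) ^ p.1)
      - ∑ p ∈ (Finset.Icc 1 (2 * n) ×ˢ Finset.Icc 1 (2 * n)).filter
          (fun p : ℕ × ℕ => p.1 * (p.1 + p.2) = 2 * n ∧ Odd p.2 ∧ 2 * m + 1 ≤ p.2),
        (-1 : ℤ) ^ p.1 := by
  have hYn : Y n = (PowerSeries.coeff (R := ℤ) n) (seriesC m) - (PowerSeries.coeff (R := ℤ) n) (seriesB m) := by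
    have := congrArg (PowerSeries.coeff (R := ℤ) n) hY
    simpa using this
  have hCsum : (PowerSeries.coeff (R := ℤ) n) (seriesC m) =
      ∑ p ∈ (Finset.Icc 1 n ×ˢ Finset.Icc 1 n).filter
          (fun p : ℕ × ℕ => p.1 * (p.1 + p.2) = n ∧ Odd p.2 ∧ 2 * m + 1 ≤ p.2),
        (-1 : ℤ) ^ p.1 := by
    rw [seriesC, PowerSeries.coeff_mk, Finset.sum_filter, Finset.sum_product]
    refine Finset.sum_congr rfl fun t ht => ?_
    rw [coeff_aux, ← innerC m n t (Finset.mem_Icc.mp ht).1 ((-1 : ℤ) ^ t)]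
  have hBsum : (PowerSeries.coeff (R := ℤ) n) (seriesB m) =
      ∑ p ∈ (Finset.Icc 1 (2 * n) ×ˢ Finset.Icc 1 (2 * n)).filter
          (fun p : ℕ × ℕ => p.1 * (p.1 + p.2) = 2 * n ∧ Odd p.2 ∧ 2 * m + 1 ≤ p.2),
        (-1 : ℤ) ^ p.1 := by
    rw [seriesB, PowerSeries.coeff_mk, Finset.sum_filter, Finset.sum_product]
    calc (∑ k ∈ Finset.Icc 1 n, (PowerSeries.coeff (R := ℤ) n)
            (PowerSeries.C (R := ℤ) ((-1) ^ k) * PowerSeries.X ^ (k * (k + 1) / 2 + m * k) * geomSer k))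
        = ∑ k ∈ Finset.Icc 1 n,
            if k*(k+1)/2 + m*k ≤ n ∧ k ∣ n - (k*(k+1)/2 + m*k) then (-1 : ℤ)^k else 0 :=
          Finset.sum_congr rfl fun k _ => coeff_aux _ _ _ _
      _ = ∑ k ∈ Finset.Icc 1 (2*n),
            if k*(k+1)/2 + m*k ≤ n ∧ k ∣ n - (k*(k+1)/2 + m*k) then (-1 : ℤ)^k else 0 := by
          apply Finset.sum_subset (Finset.Icc_subset_Icc le_rfl (by omega))
          intro k hk hk'
          have hkn : n < k := by
            simp only [Finset.mem_Icc] at hk hk'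
            omega
          rw [if_neg]
          rintro ⟨h1, -⟩
          have : k ≤ k*(k+1)/2 := by
            rw [Nat.le_div_iff_mul_le (by norm_num)]
            nlinarith
          omega
      _ = ∑ t ∈ Finset.Icc 1 (2*n), ∑ y ∈ Finset.Icc 1 (2*n),
            if (t, y).1 * ((t, y).1 + (t, y).2) = 2 * n ∧ Odd (t, y).2 ∧ 2 * m + 1 ≤ (t, y).2
            then (-1 : ℤ) ^ (t, y).1 else 0 :=
          Finset.sum_congr rfl fun t ht => by
            rw [show m*t = m*t from rfl, ← innerB m n t (Finset.mem_Icc.mp ht).1 ((-1 : ℤ)^t)]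
  rw [hYn, hCsum, hBsum]
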